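/- Let 𝔅* : L²(ℝ⁵) → L²(ℝ³) denote the Hilbert-space adjoint of the isometric extension of the partial Bargmann transform 𝔅. For every continuous compactly supported function v : ℝ⁵ → ℂ, the integral ∫_{ℝ⁵} φ_{w,ξ,η}(w',z') · v(w,ξ,η) dw dξ dη converges absolutely for every (w',z') ∈ ℝ³, the resulting function of (w',z') belongs to L²(ℝ³), and it equals 𝔅*v as an element of L²(ℝ³). -/

import Mathlib

/-!
The adjoint `𝔅*` of the partial Bargmann transform is given, on continuous compactly
supported functions `v : ℝ⁵ → ℂ`, by the absolutely convergent integral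
`(w',z') ↦ ∫ φ_{w,ξ,η}(w',z') v(w,ξ,η) dw dξ dη`.
-/

open MeasureTheory

set_option maxHeartbeats 1000000

noncomputable section

/-- Points of the plane `ℝ²`. -/
abbrev V2 : Type := ℝ × ℝ

/-- The Euclidean dot product on `ℝ²`. -/
def dot2 (a b : V2) : ℝ := a.1 * b.1 + a.2 * b.2

/-- The squared Euclidean norm on `ℝ²`. -/
def sq2 (a : V2) : ℝ := a.1 ^ 2 + a.2 ^ 2

/-- The wave packet `φ_{w,ξ,η}(w',z') = 2^{-3/2} π^{-2} ⟨η⟩^{1/2}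
    exp( iηz' + iξ·(w' − w/2) − ⟨η⟩‖w' − w‖²/2 )`, where `jb` plays the role of `⟨·⟩`. -/
def wp (jb : ℝ → ℝ) (w ξ : V2) (η : ℝ) (w' : V2) (z' : ℝ) : ℂ :=
  (((2 : ℝ) ^ (-(3 : ℝ) / 2) * Real.pi ^ (-(2 : ℝ)) * Real.sqrt (jb η) : ℝ) : ℂ) *
    Complex.exp (Complex.I * (η : ℂ) * (z' : ℂ)
      + Complex.I * ((dot2 ξ (w' - (1 / 2 : ℝ) • w) : ℝ) : ℂ)
      - ((jb η * sq2 (w' - w) / 2 : ℝ) : ℂ))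

/-- The partial Bargmann transform `𝔅u(w,ξ,η) = ∫ conj(φ_{w,ξ,η}(w',z')) u(w',z') dw' dz'`. -/
def pB (jb : ℝ → ℝ) (u : V2 × ℝ → ℂ) : (V2 × V2) × ℝ → ℂ := fun p =>
  ∫ q : V2 × ℝ, (starRingEnd ℂ) (wp jb p.1.1 p.1.2 p.2 q.1 q.2) * u q

lemma wp_continuous (jb : ℝ → ℝ) (hjb : Continuous jb) :
    Continuous fun x : ((V2 × V2) × ℝ) × (V2 × ℝ) =>
      wp jb x.1.1.1 x.1.1.2 x.1.2 x.2.1 x.2.2 := by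
  unfold wp dot2 sq2
  fun_prop

lemma wp_cont_q (jb : ℝ → ℝ) (hjb : Continuous jb) (p : V2 × ℝ) :
    Continuous fun q : (V2 × V2) × ℝ => wp jb q.1.1 q.1.2 q.2 p.1 p.2 := by
  unfold wp dot2 sq2
  fun_prop

lemma wp_cont_p (jb : ℝ → ℝ) (hjb : Continuous jb) (q : (V2 × V2) × ℝ) :
    Continuous fun p : V2 × ℝ => wp jb q.1.1 q.1.2 q.2 p.1 p.2 := by
  unfold wp dot2 sq2
  fun_prop

lemma wp_norm_le (jb : ℝ → ℝ) (hjb_one : ∀ s, 1 ≤ jb s) (w ξ : V2) (η : ℝ) (w' : V2) (z' : ℝ) :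
    ‖wp jb w ξ η w' z'‖ ≤ (2 : ℝ) ^ (-(3 : ℝ) / 2) * Real.pi ^ (-(2 : ℝ)) * Real.sqrt (jb η) := by
  have h0 : (0:ℝ) ≤ jb η := le_trans zero_le_one (hjb_one η)
  have hsq : (0:ℝ) ≤ sq2 (w' - w) := by unfold sq2; positivity
  have hre : (Complex.I * (η : ℂ) * (z' : ℂ)
      + Complex.I * ((dot2 ξ (w' - (1 / 2 : ℝ) • w) : ℝ) : ℂ)
      - ((jb η * sq2 (w' - w) / 2 : ℝ) : ℂ)).re = -(jb η * sq2 (w' - w) / 2) := by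
    simp [Complex.add_re, Complex.sub_re, Complex.mul_re]
  rw [wp, norm_mul]
  rw [Complex.norm_exp, hre]
  rw [Complex.norm_real, Real.norm_eq_abs]
  have hc : (0:ℝ) ≤ (2 : ℝ) ^ (-(3 : ℝ) / 2) * Real.pi ^ (-(2 : ℝ)) * Real.sqrt (jb η) := by
    positivity
  rw [abs_of_nonneg hc]
  nlinarith [Real.exp_le_one_iff.mpr (by nlinarith : -(jb η * sq2 (w' - w) / 2) ≤ 0),
    Real.exp_pos (-(jb η * sq2 (w' - w) / 2))]

instance : IsFiniteMeasureOnCompacts (volume : Measure ((V2 × ℝ) × ((V2 × V2) × ℝ))) :=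
  MeasureTheory.Measure.prod.instIsFiniteMeasureOnCompacts _ _

/-- Let `𝔅*` be the Hilbert-space adjoint of the isometric extension `B` of
the partial Bargmann transform. For every continuous compactly supported `v : ℝ⁵ → ℂ`, the
integral `∫ φ_{w,ξ,η}(w',z') v(w,ξ,η) dw dξ dη` converges absolutely for every `(w',z')`, the
resulting function belongs to `L²(ℝ³)`, and it equals `𝔅*v` as an element of `L²(ℝ³)`. -/
theorem partial_bargmann_adjoint
    (jb : ℝ → ℝ) (hjb_cont : Continuous jb)
    (hjb_eq : ∀ s : ℝ, 2 ≤ |s| → jb s = |s|)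
    (hjb_one : ∀ s : ℝ, 1 ≤ jb s)
    (B : Lp ℂ 2 (volume : Measure (V2 × ℝ)) →ₗᵢ[ℂ]
      Lp ℂ 2 (volume : Measure ((V2 × V2) × ℝ)))
    (hB : ∀ (u : V2 × ℝ → ℂ), Continuous u → HasCompactSupport u →
      ∀ hu2 : MemLp u 2 (volume : Measure (V2 × ℝ)),
        ⇑(B (hu2.toLp u)) =ᵐ[volume] pB jb u)
    (v : (V2 × V2) × ℝ → ℂ) (hv : Continuous v) (hvc : HasCompactSupport v)
    (hv2 : MemLp v 2 (volume : Measure ((V2 × V2) × ℝ))) :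
    (∀ p : V2 × ℝ,
      Integrable (fun q : (V2 × V2) × ℝ => wp jb q.1.1 q.1.2 q.2 p.1 p.2 * v q) volume) ∧
    MemLp (fun p : V2 × ℝ => ∫ q : (V2 × V2) × ℝ, wp jb q.1.1 q.1.2 q.2 p.1 p.2 * v q)
      2 (volume : Measure (V2 × ℝ)) ∧
    ⇑((ContinuousLinearMap.adjoint B.toContinuousLinearMap) (hv2.toLp v)) =ᵐ[volume]
      fun p : V2 × ℝ => ∫ q : (V2 × V2) × ℝ, wp jb q.1.1 q.1.2 q.2 p.1 p.2 * v q := by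
  have hcq := wp_cont_q jb hjb_cont
  have hcp := wp_cont_p jb hjb_cont
  -- Part 1: integrability
  have h1 : ∀ p : V2 × ℝ,
      Integrable (fun q : (V2 × V2) × ℝ => wp jb q.1.1 q.1.2 q.2 p.1 p.2 * v q) volume := by
    intro p
    exact ((hcq p).mul hv).integrable_of_hasCompactSupport hvc.mul_left
  set g : V2 × ℝ → ℂ :=
    fun p => ∫ q : (V2 × V2) × ℝ, wp jb q.1.1 q.1.2 q.2 p.1 p.2 * v q with hg
  -- continuity of g
  have hg_cont : Continuous g := by
    apply continuous_of_dominated (bound := fun q : (V2 × V2) × ℝ =>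
      (2 : ℝ) ^ (-(3 : ℝ) / 2) * Real.pi ^ (-(2 : ℝ)) * Real.sqrt (jb q.2) * ‖v q‖)
    · exact fun p => ((hcq p).mul hv).aestronglyMeasurable
    · intro p
      filter_upwards with q
      rw [norm_mul]
      exact mul_le_mul_of_nonneg_right (wp_norm_le jb hjb_one _ _ _ _ _) (norm_nonneg _)
    · apply Continuous.integrable_of_hasCompactSupport
      · fun_prop
      · exact hvc.norm.mul_left
    · filter_upwards with q
      exact (hcp q).mul continuous_const
  set F := (ContinuousLinearMap.adjoint B.toContinuousLinearMap) (hv2.toLp v) with hF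
  have hFloc : LocallyIntegrable (⇑F) volume :=
    (Lp.memLp F).locallyIntegrable (by norm_num)
  have key : ⇑F =ᵐ[volume] g := by
    apply ae_eq_of_integral_contDiff_smul_eq hFloc hg_cont.locallyIntegrable
    intro u₀ hu₀d hu₀s
    set u : V2 × ℝ → ℂ := fun p => (u₀ p : ℂ) with hu
    have hu_cont : Continuous u := Complex.continuous_ofReal.comp hu₀d.continuous
    have hu_supp : HasCompactSupport u := hu₀s.comp_left (g := (↑· : ℝ → ℂ)) rfl
    have hu2 : MemLp u 2 volume := hu_cont.memLp_of_hasCompactSupport hu_supp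
    set U := hu2.toLp u with hU
    have hBU : ⇑(B.toContinuousLinearMap U) =ᵐ[volume] pB jb u := hB u hu_cont hu_supp hu2
    -- conj of pB
    have hconj : ∀ q : (V2 × V2) × ℝ,
        (starRingEnd ℂ) (pB jb u q) = ∫ p : V2 × ℝ, wp jb q.1.1 q.1.2 q.2 p.1 p.2 * u p := by
      intro q
      rw [pB, ← integral_conj]
      congr 1
      funext p
      simp [hu, map_mul, Complex.conj_conj, Complex.conj_ofReal]
    -- LHS computation
    have hLHS : ∫ p, u₀ p • F p
        = ∫ q : (V2 × V2) × ℝ, v q * (starRingEnd ℂ) (pB jb u q) := by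
      have e1 : ∫ p, u₀ p • F p = (starRingEnd ℂ) (∫ p, (starRingEnd ℂ) (F p) * u p) := by
        rw [← integral_conj]
        congr 1
        funext p
        simp [hu, map_mul, Complex.conj_conj, Complex.conj_ofReal, Complex.real_smul, mul_comm]
      have e2 : (inner ℂ F U : ℂ) = ∫ p, (starRingEnd ℂ) (F p) * u p := by
        rw [L2.inner_def]
        apply integral_congr_ae
        filter_upwards [hu2.coeFn_toLp] with p hp
        rw [RCLike.inner_apply, hU, hp, mul_comm]
      have e3 : (inner ℂ F U : ℂ)
          = ∫ q : (V2 × V2) × ℝ, (starRingEnd ℂ) (v q) * pB jb u q := by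
        rw [hF, ContinuousLinearMap.adjoint_inner_left, L2.inner_def]
        apply integral_congr_ae
        filter_upwards [hv2.coeFn_toLp, hBU] with q hq hq'
        rw [RCLike.inner_apply, hq, hq', mul_comm]
      rw [e1, ← e2, e3, ← integral_conj]
      congr 1
      funext q
      simp [map_mul, Complex.conj_conj]
    -- RHS computation via Fubini
    have hint : Integrable
        (Function.uncurry fun (p : V2 × ℝ) (q : (V2 × V2) × ℝ) =>
          u p * (wp jb q.1.1 q.1.2 q.2 p.1 p.2 * v q))
        ((volume : Measure (V2 × ℝ)).prod (volume : Measure ((V2 × V2) × ℝ))) := by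
      rw [← MeasureTheory.Measure.volume_eq_prod]
      apply Continuous.integrable_of_hasCompactSupport
      · have : Continuous fun x : (V2 × ℝ) × ((V2 × V2) × ℝ) =>
            wp jb x.2.1.1 x.2.1.2 x.2.2 x.1.1 x.1.2 := by
          unfold wp dot2 sq2; fun_prop
        exact (hu_cont.comp continuous_fst).mul (this.mul (hv.comp continuous_snd))
      · apply HasCompactSupport.intro (hu_supp.prod hvc)
        intro x hx
        rcases not_and_or.mp (by simpa [Set.prodMk_mem_set_prod_eq] using hx) with h | h
        · simp [Function.uncurry, image_eq_zero_of_notMem_tsupport h]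
        · simp [Function.uncurry, image_eq_zero_of_notMem_tsupport h]
    have hRHS : ∫ p, u₀ p • g p
        = ∫ q : (V2 × V2) × ℝ, v q * (starRingEnd ℂ) (pB jb u q) := by
      have e4 : ∫ p, u₀ p • g p
          = ∫ p : V2 × ℝ, ∫ q : (V2 × V2) × ℝ,
              u p * (wp jb q.1.1 q.1.2 q.2 p.1 p.2 * v q) := by
        congr 1
        funext p
        rw [integral_const_mul, hg, Complex.real_smul, hu]
      rw [e4, integral_integral_swap hint]
      congr 1
      funext q
      rw [hconj q]
      rw [← integral_const_mul]
      congr 1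
      funext p
      ring
    rw [hLHS, hRHS]
  refine ⟨h1, (Lp.memLp F).ae_eq key, key⟩

end
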